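/- Let n ≥ 1, δ : Fin n → ℝ, μ : Fin n → ℝ with μ t > 0 for all t, and let π : ℝ^d → Fin n → ℝ be such that each map w ↦ π w t is differentiable with π w t > 0 for all w, t. Set ρ w t = (π w t)/(μ t) and ρ̄ w t = ρ w t / ∑_u ρ w u, and define the reweighted objective V(w) = ∑_t δ t · ρ̄ w t. Then V is differentiable and ∇V(w) = ∑_t δ t · ρ̄ w t · ( ∇_w log(π w t) − ∑_u ρ̄ w u · ∇_w log(π w u) ). -/

import Mathlib

open InnerProductSpace


/-- Normalized importance weight `ρ̄ w t = (π w t / μ t) / ∑ u, π w u / μ u`. -/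
noncomputable def rhoBar {d n : ℕ} (μ : Fin n → ℝ)
    (π : EuclideanSpace ℝ (Fin d) → Fin n → ℝ)
    (w : EuclideanSpace ℝ (Fin d)) (t : Fin n) : ℝ :=
  (π w t / μ t) / ∑ u, π w u / μ u

set_option maxHeartbeats 1000000 in
/-- Score-function form of the gradient of the reweighted IPS/DPM objective
`V(w) = ∑ t, δ t * ρ̄ w t`, where `ρ̄ w t = (π w t / μ t) / ∑ u, π w u / μ u`, each
`w ↦ π w t` being differentiable and positive and `μ t > 0`: `V` is differentiable and
`∇V(w) = ∑ t, δ t * ρ̄ w t • (∇ log (π w t) − ∑ u, ρ̄ w u • ∇ log (π w u))`. -/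
theorem ipsr_objective_gradient {d n : ℕ} (hn : 1 ≤ n)
    (δ μ : Fin n → ℝ) (hμ : ∀ t, 0 < μ t)
    (π : EuclideanSpace ℝ (Fin d) → Fin n → ℝ)
    (hdiff : ∀ t, Differentiable ℝ (fun w => π w t))
    (hpos : ∀ w t, 0 < π w t) :
    Differentiable ℝ (fun w => ∑ t, δ t * rhoBar μ π w t)
      ∧ ∀ w, gradient (fun w => ∑ t, δ t * rhoBar μ π w t) w
          = ∑ t, (δ t * rhoBar μ π w t) •
              (gradient (fun w => Real.log (π w t)) w
                - ∑ u, rhoBar μ π w u • gradient (fun w => Real.log (π w u)) w) := by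
  -- derivative scaffolding, valid at every point w
  have main : ∀ w : EuclideanSpace ℝ (Fin d),
      HasFDerivAt (fun w => ∑ t, δ t * rhoBar μ π w t)
        (∑ t, δ t • ((π w t / μ t) •
            ((-((∑ u, π w u / μ u) ^ 2)⁻¹) • (∑ u, (μ u)⁻¹ • fderiv ℝ (fun w => π w u) w))
          + (∑ u, π w u / μ u)⁻¹ • ((μ t)⁻¹ • fderiv ℝ (fun w => π w t) w))) w := by
    intro w
    set f' : Fin n → (EuclideanSpace ℝ (Fin d) →L[ℝ] ℝ) :=
      fun t => fderiv ℝ (fun w => π w t) w with hf'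
    have hf : ∀ t, HasFDerivAt (fun w => π w t) (f' t) w := fun t => ((hdiff t) w).hasFDerivAt
    have hS : HasFDerivAt (fun w => ∑ u, π w u / μ u) (∑ u, (μ u)⁻¹ • f' u) w := by
      apply HasFDerivAt.fun_sum
      intro u _
      simpa [div_eq_mul_inv, mul_comm] using ((hf u).const_mul (μ u)⁻¹)
    have hSpos : 0 < ∑ u, π w u / μ u :=
      Finset.sum_pos (fun u _ => div_pos (hpos w u) (hμ u)) ⟨⟨0, hn⟩, Finset.mem_univ _⟩
    have hinv : HasFDerivAt (fun w => (∑ u, π w u / μ u)⁻¹)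
        ((-((∑ u, π w u / μ u) ^ 2)⁻¹) • (∑ u, (μ u)⁻¹ • f' u)) w :=
      (hasDerivAt_inv hSpos.ne').comp_hasFDerivAt w hS
    apply HasFDerivAt.fun_sum
    intro t _
    have h1 : HasFDerivAt (fun w => π w t / μ t) ((μ t)⁻¹ • f' t) w := by
      simpa [div_eq_mul_inv, mul_comm] using ((hf t).const_mul (μ t)⁻¹)
    have h2 := h1.fun_mul hinv
    have h3 := h2.const_mul (δ t)
    simpa only [rhoBar, div_eq_mul_inv] using h3
  constructor
  · exact fun w => (main w).differentiableAt
  intro w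
  set f' : Fin n → (EuclideanSpace ℝ (Fin d) →L[ℝ] ℝ) :=
    fun t => fderiv ℝ (fun w => π w t) w with hf'
  have hf : ∀ t, HasFDerivAt (fun w => π w t) (f' t) w := fun t => ((hdiff t) w).hasFDerivAt
  have hlog : ∀ t, gradient (fun w => Real.log (π w t)) w
      = (toDual ℝ (EuclideanSpace ℝ (Fin d))).symm ((π w t)⁻¹ • f' t) := fun t =>
    (((hf t).log (hpos w t).ne').hasGradientAt).gradient
  have hgrad := ((main w).hasGradientAt).gradient
  rw [hgrad]
  simp only [hlog]
  have hSpos : 0 < ∑ u, π w u / μ u :=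
    Finset.sum_pos (fun u _ => div_pos (hpos w u) (hμ u)) ⟨⟨0, hn⟩, Finset.mem_univ _⟩
  -- now a pure CLM identity; reduce sub/smul through the equiv on RHS first
  have key : ∀ t : Fin n,
      (δ t * rhoBar μ π w t) •
        ((toDual ℝ (EuclideanSpace ℝ (Fin d))).symm ((π w t)⁻¹ • f' t)
          - ∑ u, rhoBar μ π w u • (toDual ℝ (EuclideanSpace ℝ (Fin d))).symm ((π w u)⁻¹ • f' u))
      = (toDual ℝ (EuclideanSpace ℝ (Fin d))).symm
          ((δ t * rhoBar μ π w t) •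
            ((π w t)⁻¹ • f' t - ∑ u, rhoBar μ π w u • ((π w u)⁻¹ • f' u))) := by
    intro t
    simp only [map_smul, map_sub, map_sum]
  simp only [key]
  rw [← map_sum]
  congr 1
  apply Finset.sum_congr rfl
  intro t _
  ext x
  simp only [ContinuousLinearMap.smul_apply, ContinuousLinearMap.add_apply,
    ContinuousLinearMap.sub_apply, ContinuousLinearMap.sum_apply, ContinuousLinearMap.neg_apply,
    smul_eq_mul, rhoBar, hf']
  have hinner : ∑ u, π w u / μ u / (∑ v, π w v / μ v) * ((π w u)⁻¹ * f' u x)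
      = (∑ v, π w v / μ v)⁻¹ * ∑ u, (μ u)⁻¹ * f' u x := by
    rw [Finset.mul_sum]
    apply Finset.sum_congr rfl
    intro u _
    have hu : π w u ≠ 0 := (hpos w u).ne'
    field_simp
  rw [hinner]
  have hμt : μ t ≠ 0 := (hμ t).ne'
  have hπt : π w t ≠ 0 := (hpos w t).ne'
  have hS : (∑ v, π w v / μ v) ≠ 0 := hSpos.ne'
  field_simp
  ring
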